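/- Quasi-polynomial reduction: let t be a ring-with-⊥ term in n variables. Then either E_wcr,⊥ ⊢ t = ⊥, or there exist α ∈ MvPolynomial (Fin n) ℤ and a finite set S of variables disjoint from the variables of α such that E_wcr,⊥ ⊢ t = α* + 0·∏_{i∈S} x_i (where for S = ∅ the right-hand side is taken to be α*); that is, t is provably equal to ⊥ or to a quasi-polynomial sumterm. -/

import Mathlib

universe u

/-- Ring-with-`⊥` terms in `n` variables: variables, constants `0`, `1` and `⊥`,
negation, addition and multiplication.  Terms avoiding the constructor `bot`
are the ring terms. -/
inductive RTerm (n : ℕ) : Type where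
  | var : Fin n → RTerm n
  | zero : RTerm n
  | one : RTerm n
  | bot : RTerm n
  | neg : RTerm n → RTerm n
  | add : RTerm n → RTerm n → RTerm n
  | mul : RTerm n → RTerm n → RTerm n

namespace RTerm

/-- Addition on the `⊥`-enlargement `Option R` of a commutative ring `R`. -/
def bAdd {R : Type u} [CommRing R] : Option R → Option R → Option R
  | some a, some b => some (a + b)
  | _, _ => none

/-- Multiplication on the `⊥`-enlargement `Option R` of a commutative ring `R`. -/
def bMul {R : Type u} [CommRing R] : Option R → Option R → Option R
  | some a, some b => some (a * b)
  | _, _ => none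

/-- Negation on the `⊥`-enlargement `Option R` of a commutative ring `R`. -/
def bNeg {R : Type u} [CommRing R] : Option R → Option R
  | some a => some (-a)
  | none => none

/-- Evaluation of a ring-with-`⊥` term in the `⊥`-enlargement `Option R` of a
commutative ring `R`, under a valuation `σ : Fin n → Option R`. -/
def evalB {n : ℕ} {R : Type u} [CommRing R] (σ : Fin n → Option R) :
    RTerm n → Option R
  | var i => σ i
  | zero => some 0
  | one => some 1
  | bot => none
  | neg t => bNeg (t.evalB σ)
  | add t s => bAdd (t.evalB σ) (s.evalB σ)
  | mul t s => bMul (t.evalB σ) (s.evalB σ)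

/-- Derivability in equational logic from the axioms `E_wcr,⊥`: the least relation
containing all substitution instances of the eleven axioms that is reflexive,
symmetric, transitive and closed under the term-forming operations. -/
inductive DerivWcr {n : ℕ} : RTerm n → RTerm n → Prop
  | add_assoc (x y z : RTerm n) : DerivWcr ((x.add y).add z) (x.add (y.add z))
  | add_comm (x y : RTerm n) : DerivWcr (x.add y) (y.add x)
  | add_zero (x : RTerm n) : DerivWcr (x.add zero) x
  | add_neg (x : RTerm n) : DerivWcr (x.add x.neg) (zero.mul x)
  | mul_assoc (x y z : RTerm n) : DerivWcr (x.mul (y.mul z)) ((x.mul y).mul z)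
  | mul_comm (x y : RTerm n) : DerivWcr (x.mul y) (y.mul x)
  | one_mul (x : RTerm n) : DerivWcr (one.mul x) x
  | mul_add (x y z : RTerm n) : DerivWcr (x.mul (y.add z)) ((x.mul y).add (x.mul z))
  | neg_neg (x : RTerm n) : DerivWcr x.neg.neg x
  | zero_mul_add (x y : RTerm n) : DerivWcr (zero.mul (x.add y)) (zero.mul (x.mul y))
  | add_bot (x : RTerm n) : DerivWcr (x.add bot) bot
  | refl (x : RTerm n) : DerivWcr x x
  | symm {x y : RTerm n} : DerivWcr x y → DerivWcr y x
  | trans {x y z : RTerm n} : DerivWcr x y → DerivWcr y z → DerivWcr x z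
  | neg_congr {x y : RTerm n} : DerivWcr x y → DerivWcr x.neg y.neg
  | add_congr {x x' y y' : RTerm n} :
      DerivWcr x x' → DerivWcr y y' → DerivWcr (x.add y) (x'.add y')
  | mul_congr {x x' y y' : RTerm n} :
      DerivWcr x x' → DerivWcr y y' → DerivWcr (x.mul y) (x'.mul y')

/-- Term powers: `pow t 0 = 1`, `pow t 1 = t`, `pow t (k+1) = pow t k · t`. -/
def pow {n : ℕ} (t : RTerm n) : ℕ → RTerm n
  | 0 => one
  | 1 => t
  | k + 2 => (t.pow (k + 1)).mul t

/-- Numerals for natural numbers: `0`, `1`, `n+1 = n + 1`. -/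
def natNumeral (n : ℕ) : ℕ → RTerm n
  | 0 => zero
  | 1 => one
  | k + 2 => (natNumeral n (k + 1)).add one

/-- Numerals for integers, built from `0`, `1`, `+` and negation. -/
def intNumeral (n : ℕ) (c : ℤ) : RTerm n :=
  if 0 ≤ c then natNumeral n c.toNat else (natNumeral n (-c).toNat).neg

/-- The term `x₁^{d₁} ⋯ xₙ^{dₙ}` representing a monomial `d`. -/
def monTerm {n : ℕ} (d : Fin n →₀ ℕ) : RTerm n :=
  ((List.finRange n).map fun i => (var i).pow (d i)).foldr mul one

/-- `polyTerm α` is the canonical ring term `α*` representing the integer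
multivariate polynomial `α`: the sum, over the monomials in the support of `α`,
of the numeral of the coefficient times the product of the variables raised to
their powers (and `0* = 0`). -/
noncomputable def polyTerm {n : ℕ} (α : MvPolynomial (Fin n) ℤ) : RTerm n :=
  (α.support.toList.map fun d => (intNumeral n (α.coeff d)).mul (monTerm d)).foldr add zero

/-- Product of a list of terms (empty product `1`, singleton product the term
itself). -/
def prodList {n : ℕ} : List (RTerm n) → RTerm n
  | [] => one
  | [t] => t
  | t :: ts => t.mul (prodList ts)

end RTerm

namespace RTerm

variable {n : ℕ}

local infix:50 " ~~ " => DerivWcr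

instance : Trans (@DerivWcr n) (@DerivWcr n) (@DerivWcr n) := ⟨DerivWcr.trans⟩

namespace DerivWcr

theorem zero_add (x : RTerm n) : zero.add x ~~ x := (add_comm _ _).trans (add_zero x)
theorem mul_one (x : RTerm n) : x.mul one ~~ x := (mul_comm _ _).trans (one_mul x)
theorem add_left_comm (x y z : RTerm n) : x.add (y.add z) ~~ y.add (x.add z) :=
  ((add_assoc x y z).symm.trans (add_congr (add_comm x y) (refl z))).trans (add_assoc y x z)
theorem add_right_comm (x y z : RTerm n) : (x.add y).add z ~~ (x.add z).add y :=
  ((add_assoc x y z).trans (add_congr (refl x) (add_comm y z))).trans (add_assoc x z y).symm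
theorem mul_assoc' (x y z : RTerm n) : (x.mul y).mul z ~~ x.mul (y.mul z) := (mul_assoc x y z).symm
theorem add_mul (x y z : RTerm n) : (x.add y).mul z ~~ (z.mul x).add (z.mul y) :=
  (mul_comm _ _).trans (mul_add z x y)
theorem add_mul' (x y z : RTerm n) : (x.add y).mul z ~~ (x.mul z).add (y.mul z) :=
  (add_mul x y z).trans (add_congr (mul_comm z x) (mul_comm z y))
theorem mul_add' (x y z : RTerm n) : x.mul (y.add z) ~~ (x.mul y).add (x.mul z) := mul_add x y z

/-- `0·1 = 0` -/
theorem zero_mul_one : (zero.mul one : RTerm n) ~~ zero := (mul_comm _ _).trans (one_mul zero)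

/-- absorption: `x + 0·x = x` -/
theorem absorb (x : RTerm n) : x.add (zero.mul x) ~~ x :=
  calc x.add (zero.mul x) ~~ (x.mul one).add (x.mul zero) :=
        add_congr (mul_one x).symm (mul_comm zero x)
    _ ~~ x.mul (one.add zero) := (mul_add x one zero).symm
    _ ~~ x.mul one := mul_congr (refl x) (add_zero one)
    _ ~~ x := mul_one x

theorem absorb' (x : RTerm n) : (zero.mul x).add x ~~ x := (add_comm _ _).trans (absorb x)

/-- `0·x + 0·y = 0·(x·y)` -/
theorem zmerge (x y : RTerm n) : (zero.mul x).add (zero.mul y) ~~ zero.mul (x.mul y) :=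
  ((mul_add zero x y).symm.trans (zero_mul_add x y))

/-- `0·0 = 0` -/
theorem zero_mul_zero : (zero.mul zero : RTerm n) ~~ zero :=
  ((zero_add (zero.mul zero)).symm).trans (absorb zero)

/-- `0·(-x) = 0·x` -/
theorem zneg (x : RTerm n) : zero.mul x.neg ~~ zero.mul x :=
  calc zero.mul x.neg ~~ x.neg.add x.neg.neg := (add_neg x.neg).symm
    _ ~~ x.neg.add x := add_congr (refl _) (neg_neg x)
    _ ~~ x.add x.neg := add_comm _ _
    _ ~~ zero.mul x := add_neg x

/-- `0·x + 0·x = 0·x` -/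
theorem zidem (x : RTerm n) : (zero.mul x).add (zero.mul x) ~~ zero.mul x :=
  calc (zero.mul x).add (zero.mul x) ~~ (x.mul zero).add (x.mul zero) :=
        add_congr (mul_comm _ _) (mul_comm _ _)
    _ ~~ x.mul (zero.add zero) := (mul_add _ _ _).symm
    _ ~~ x.mul zero := mul_congr (refl x) (add_zero zero)
    _ ~~ zero.mul x := mul_comm _ _

/-- rewriting the first factor under `0·_` : `0·m ~ 0·m' → 0·(m·r) ~ 0·(m'·r)` -/
theorem zctx {m m' : RTerm n} (r : RTerm n) (h : zero.mul m ~~ zero.mul m') :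
    zero.mul (m.mul r) ~~ zero.mul (m'.mul r) :=
  calc zero.mul (m.mul r) ~~ (zero.mul m).mul r := mul_assoc _ _ _
    _ ~~ (zero.mul m').mul r := mul_congr h (refl r)
    _ ~~ zero.mul (m'.mul r) := (mul_assoc _ _ _).symm

/-- `0·(x·x) = 0·x` -/
theorem zsq (x : RTerm n) : zero.mul (x.mul x) ~~ zero.mul x :=
  ((zero_mul_add x x).symm.trans (mul_add zero x x)).trans (zidem x)

/-- `-0 = 0` -/
theorem neg_zero : (zero.neg : RTerm n) ~~ zero :=
  calc (zero.neg : RTerm n) ~~ zero.add zero.neg := (zero_add _).symm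
    _ ~~ zero.mul zero := add_neg zero
    _ ~~ zero := zero_mul_zero

/-- `-(x·y) = (-x)·y` -/
theorem neg_mul (x y : RTerm n) : (x.mul y).neg ~~ x.neg.mul y :=
  calc (x.mul y).neg ~~ (x.mul y).neg.add (zero.mul (x.mul y).neg) := (absorb _).symm
    _ ~~ (x.mul y).neg.add (zero.mul (x.mul y)) := add_congr (refl _) (zneg _)
    _ ~~ (x.mul y).neg.add ((x.mul y).add (x.neg.mul y)) := by
        refine add_congr (refl _) ?_
        calc zero.mul (x.mul y) ~~ (zero.mul x).mul y := mul_assoc _ _ _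
          _ ~~ ((x.add x.neg).mul y) := mul_congr (add_neg x).symm (refl y)
          _ ~~ (x.mul y).add (x.neg.mul y) := add_mul' _ _ _
    _ ~~ ((x.mul y).neg.add (x.mul y)).add (x.neg.mul y) := (add_assoc _ _ _).symm
    _ ~~ (zero.mul (x.mul y)).add (x.neg.mul y) := by
        refine add_congr ?_ (refl _)
        exact ((add_comm _ _).trans (add_neg (x.mul y)))
    _ ~~ (zero.mul (x.neg.mul y)).add (x.neg.mul y) :=
        add_congr (zctx y (zneg x).symm) (refl _)
    _ ~~ x.neg.mul y := absorb' _

/-- `-(x+y) = -x + -y` -/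
theorem neg_add (x y : RTerm n) : (x.add y).neg ~~ x.neg.add y.neg := by
  have h1 : (x.add y).add (x.neg.add y.neg) ~~ zero.mul (x.mul y) :=
    calc (x.add y).add (x.neg.add y.neg) ~~ x.add (y.add (x.neg.add y.neg)) := add_assoc _ _ _
      _ ~~ x.add (x.neg.add (y.add y.neg)) := add_congr (refl x) (add_left_comm _ _ _)
      _ ~~ (x.add x.neg).add (y.add y.neg) := (add_assoc _ _ _).symm
      _ ~~ (zero.mul x).add (zero.mul y) := add_congr (add_neg x) (add_neg y)
      _ ~~ zero.mul (x.mul y) := zmerge x y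
  calc (x.add y).neg ~~ (x.add y).neg.add (zero.mul (x.add y).neg) := (absorb _).symm
    _ ~~ (x.add y).neg.add (zero.mul (x.add y)) := add_congr (refl _) (zneg _)
    _ ~~ (x.add y).neg.add (zero.mul (x.mul y)) := add_congr (refl _) (zero_mul_add x y)
    _ ~~ (x.add y).neg.add ((x.add y).add (x.neg.add y.neg)) := add_congr (refl _) h1.symm
    _ ~~ ((x.add y).neg.add (x.add y)).add (x.neg.add y.neg) := (add_assoc _ _ _).symm
    _ ~~ (zero.mul (x.add y)).add (x.neg.add y.neg) :=
        add_congr ((add_comm _ _).trans (add_neg _)) (refl _)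
    _ ~~ (zero.mul (x.mul y)).add (x.neg.add y.neg) := add_congr (zero_mul_add x y) (refl _)
    _ ~~ (x.neg.add y.neg).add (zero.mul (x.mul y)) := add_comm _ _
    _ ~~ (x.neg.add y.neg).add (zero.mul ((x.neg.add y.neg))) := by
        refine add_congr (refl _) ?_
        calc zero.mul (x.mul y) ~~ (zero.mul x).add (zero.mul y) := (zmerge x y).symm
          _ ~~ (zero.mul x.neg).add (zero.mul y.neg) := add_congr (zneg x).symm (zneg y).symm
          _ ~~ zero.mul (x.neg.mul y.neg) := zmerge _ _
          _ ~~ zero.mul (x.neg.add y.neg) := (zero_mul_add _ _).symm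
    _ ~~ x.neg.add y.neg := absorb _

/-- `0·(x+y) = 0·x + 0·y` (distribution) -/
theorem zadd (x y : RTerm n) : zero.mul (x.add y) ~~ (zero.mul x).add (zero.mul y) := mul_add _ _ _

/-- `-⊥ = ⊥` -/
theorem neg_bot : (bot.neg : RTerm n) ~~ bot :=
  calc (bot.neg : RTerm n) ~~ bot.neg.add (zero.mul bot.neg) := (absorb _).symm
    _ ~~ bot.neg.add (bot.neg.add bot.neg.neg) := add_congr (refl _) (add_neg bot.neg).symm
    _ ~~ bot.neg.add (bot.neg.add bot) := add_congr (refl _) (add_congr (refl _) (neg_neg bot))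
    _ ~~ bot.neg.add bot := add_congr (refl _) (add_bot _)
    _ ~~ bot := add_bot _

/-- `0·⊥ = ⊥` -/
theorem zero_mul_bot : (zero.mul bot : RTerm n) ~~ bot :=
  calc (zero.mul bot : RTerm n) ~~ bot.add bot.neg := (add_neg bot).symm
    _ ~~ bot.neg.add bot := add_comm _ _
    _ ~~ bot := add_bot _

/-- `x·⊥ = ⊥` -/
theorem mul_bot (x : RTerm n) : x.mul bot ~~ bot := by
  have hz : zero.mul (x.mul bot) ~~ bot :=
    calc zero.mul (x.mul bot) ~~ zero.mul (x.add bot) := (zero_mul_add x bot).symm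
      _ ~~ zero.mul bot := mul_congr (refl zero) (add_bot x)
      _ ~~ bot := zero_mul_bot
  calc x.mul bot ~~ (x.mul bot).add (zero.mul (x.mul bot)) := (absorb _).symm
    _ ~~ (x.mul bot).add bot := add_congr (refl _) hz
    _ ~~ bot := add_bot _

theorem bot_mul (x : RTerm n) : bot.mul x ~~ bot := (mul_comm _ _).trans (mul_bot x)
theorem bot_add (x : RTerm n) : bot.add x ~~ bot := (add_comm _ _).trans (add_bot x)

end DerivWcr
end RTerm

namespace RTerm

variable {n : ℕ}

local infix:50 " ~~ " => DerivWcr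

/-- sum of a list of terms -/
def sumL (l : List (RTerm n)) : RTerm n := l.foldr add zero

/-- product of a list of terms (with unit) -/
def prodF (l : List (RTerm n)) : RTerm n := l.foldr mul one

@[simp] theorem sumL_nil : (sumL [] : RTerm n) = zero := rfl
@[simp] theorem sumL_cons (a : RTerm n) (l) : sumL (a :: l) = a.add (sumL l) := rfl
@[simp] theorem prodF_nil : (prodF [] : RTerm n) = one := rfl
@[simp] theorem prodF_cons (a : RTerm n) (l) : prodF (a :: l) = a.mul (prodF l) := rfl


/-- syntactic variables -/
def varsf : RTerm n → Finset (Fin n)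
  | var i => {i}
  | zero => ∅
  | one => ∅
  | bot => ∅
  | neg t => varsf t
  | add t s => varsf t ∪ varsf s
  | mul t s => varsf t ∪ varsf s


@[simp] theorem varsf_var (i : Fin n) : (var i).varsf = {i} := rfl
@[simp] theorem varsf_zero : (zero : RTerm n).varsf = ∅ := rfl
@[simp] theorem varsf_one : (one : RTerm n).varsf = ∅ := rfl
@[simp] theorem varsf_bot : (bot : RTerm n).varsf = ∅ := rfl
@[simp] theorem varsf_neg (t : RTerm n) : t.neg.varsf = t.varsf := rfl
@[simp] theorem varsf_add (t s : RTerm n) : (t.add s).varsf = t.varsf ∪ s.varsf := rfl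
@[simp] theorem varsf_mul (t s : RTerm n) : (t.mul s).varsf = t.varsf ∪ s.varsf := rfl

/-- the term contains no `⊥` -/
def botFree : RTerm n → Prop
  | var _ => True
  | zero => True
  | one => True
  | bot => False
  | neg t => botFree t
  | add t s => botFree t ∧ botFree s
  | mul t s => botFree t ∧ botFree s

namespace DerivWcr

theorem mul_left_comm (x y z : RTerm n) : x.mul (y.mul z) ~~ y.mul (x.mul z) :=
  ((mul_assoc x y z).trans (mul_congr (mul_comm x y) (refl z))).trans (mul_assoc y x z).symm

theorem scong : ∀ {l l' : List (RTerm n)}, List.Forall₂ DerivWcr l l' → sumL l ~~ sumL l'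
  | _, _, List.Forall₂.nil => refl _
  | _, _, List.Forall₂.cons h hs => add_congr h (scong hs)

theorem pcong : ∀ {l l' : List (RTerm n)}, List.Forall₂ DerivWcr l l' → prodF l ~~ prodF l'
  | _, _, List.Forall₂.nil => refl _
  | _, _, List.Forall₂.cons h hs => mul_congr h (pcong hs)

theorem sperm {l l' : List (RTerm n)} (h : l.Perm l') : sumL l ~~ sumL l' := by
  induction h with
  | nil => exact refl _
  | cons a _ ih => exact add_congr (refl a) ih
  | swap a b l => exact add_left_comm _ _ _
  | trans _ _ ih1 ih2 => exact ih1.trans ih2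

theorem pperm {l l' : List (RTerm n)} (h : l.Perm l') : prodF l ~~ prodF l' := by
  induction h with
  | nil => exact refl _
  | cons a _ ih => exact mul_congr (refl a) ih
  | swap a b l => exact mul_left_comm _ _ _
  | trans _ _ ih1 ih2 => exact ih1.trans ih2

theorem sapp : ∀ (l l' : List (RTerm n)), sumL (l ++ l') ~~ (sumL l).add (sumL l')
  | [], l' => (zero_add (sumL l')).symm
  | a :: l, l' =>
    (add_congr (refl a) (sapp l l')).trans (add_assoc a (sumL l) (sumL l')).symm

theorem papp : ∀ (l l' : List (RTerm n)), prodF (l ++ l') ~~ (prodF l).mul (prodF l')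
  | [], l' => (one_mul (prodF l')).symm
  | a :: l, l' =>
    (mul_congr (refl a) (papp l l')).trans (mul_assoc a (prodF l) (prodF l'))

theorem prodList_eq : ∀ (l : List (RTerm n)), prodList l ~~ prodF l
  | [] => refl one
  | [t] => (mul_one t).symm
  | t :: s :: l => mul_congr (refl t) (prodList_eq (s :: l))

/-- rewriting the second factor under `0·_` -/
theorem zctx' {m m' : RTerm n} (r : RTerm n) (h : zero.mul m ~~ zero.mul m') :
    zero.mul (r.mul m) ~~ zero.mul (r.mul m') :=
  ((mul_congr (refl zero) (mul_comm r m)).trans (zctx r h)).trans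
    (mul_congr (refl zero) (mul_comm m' r))

theorem zabsorb_mem : ∀ (l : List (Fin n)) (a : Fin n), a ∈ l →
    zero.mul ((var a).mul (prodF (l.map var))) ~~ zero.mul (prodF (l.map var))
  | b :: l, a, h => by
    rcases List.mem_cons.mp h with rfl | h
    · calc zero.mul ((var a).mul ((var a).mul (prodF (l.map var))))
          ~~ zero.mul (((var a).mul (var a)).mul (prodF (l.map var))) :=
            mul_congr (refl zero) (mul_assoc _ _ _)
        _ ~~ zero.mul ((var a).mul (prodF (l.map var))) := zctx _ (zsq _)
    · calc zero.mul ((var a).mul ((var b).mul (prodF (l.map var))))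
          ~~ zero.mul ((var b).mul ((var a).mul (prodF (l.map var)))) :=
            mul_congr (refl zero) (mul_left_comm _ _ _)
        _ ~~ zero.mul ((var b).mul (prodF (l.map var))) := zctx' _ (zabsorb_mem l a h)

theorem zdedup : ∀ (l : List (Fin n)),
    zero.mul (prodF (l.map var)) ~~ zero.mul (prodF (l.dedup.map var))
  | [] => refl _
  | a :: l => by
    by_cases h : a ∈ l
    · rw [List.dedup_cons_of_mem h]
      exact (zabsorb_mem l a h).trans (zdedup l)
    · rw [List.dedup_cons_of_notMem h]
      exact (zctx' _ (zdedup l) : _)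

theorem zvars {l l' : List (Fin n)} (h : l.toFinset = l'.toFinset) :
    zero.mul (prodF (l.map var)) ~~ zero.mul (prodF (l'.map var)) := by
  have hperm : l.dedup.Perm l'.dedup := by
    apply List.perm_of_nodup_nodup_toFinset_eq (List.nodup_dedup l) (List.nodup_dedup l')
    ext x
    simp only [List.mem_toFinset, List.mem_dedup]
    rw [← List.mem_toFinset, h, List.mem_toFinset]
  exact ((zdedup l).trans
    (mul_congr (refl zero) (pperm (hperm.map var)))).trans (zdedup l').symm

end DerivWcr

/-- the canonical `0·∏S` term over a finset of variables (with `prodF`) -/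
def zcan (S : Finset (Fin n)) : RTerm n :=
  zero.mul (prodF ((S.sort (· ≤ ·)).map var))

namespace DerivWcr

theorem zcan_of_list {l : List (Fin n)} {S : Finset (Fin n)} (h : l.toFinset = S) :
    zero.mul (prodF (l.map var)) ~~ zcan S := by
  apply zvars
  rw [h, Finset.sort_toFinset]

theorem jmerge (A B : Finset (Fin n)) : (zcan A).add (zcan B) ~~ zcan (A ∪ B) := by
  refine (zmerge _ _).trans ?_
  refine DerivWcr.trans (mul_congr (refl zero) (papp _ _).symm) ?_
  rw [← List.map_append]
  apply zcan_of_list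
  simp [Finset.sort_toFinset]

theorem zcan_empty : (zcan (∅ : Finset (Fin n))) ~~ zero := by
  rw [zcan, Finset.sort_empty]
  exact zero_mul_one

theorem botFree_prodF {l : List (RTerm n)} (h : ∀ x ∈ l, botFree x) : botFree (prodF l) := by
  induction l with
  | nil => trivial
  | cons a l ih =>
    exact ⟨h a (List.mem_cons_self), ih fun x hx => h x (List.mem_cons_of_mem a hx)⟩

theorem varsf_prodF_map_var (l : List (Fin n)) : varsf (prodF (l.map var)) = l.toFinset := by
  induction l with
  | nil => rfl
  | cons a l ih =>
    rw [List.map_cons, prodF_cons, varsf_mul, ih, List.toFinset_cons, varsf_var,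
      Finset.insert_eq]

/-- `0·w = zcan (varsf w)` for `⊥`-free `w` -/
theorem zq : ∀ (w : RTerm n), botFree w → zero.mul w ~~ zcan (varsf w)
  | var i, _ => by
    refine DerivWcr.trans (mul_congr (refl zero) (mul_one (var i)).symm) ?_
    exact zcan_of_list (l := [i]) (by simp [varsf])
  | zero, _ => by
    refine zero_mul_zero.trans ?_
    refine DerivWcr.trans zero_mul_one.symm ?_
    exact zcan_of_list (l := []) (by simp [varsf])
  | one, _ => zcan_of_list (l := []) (by simp [varsf])
  | neg t, h => (zneg t).trans (zq t h)
  | add t s, h => by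
    refine (zero_mul_add t s).trans ?_
    refine DerivWcr.trans ((zmerge t s).symm) ?_
    exact ((add_congr (zq t h.1) (zq s h.2)).trans (jmerge _ _) : _)
  | mul t s, h => by
    refine DerivWcr.trans ((zmerge t s).symm) ?_
    exact ((add_congr (zq t h.1) (zq s h.2)).trans (jmerge _ _) : _)

/-- growing/shrinking the `0`-part -/
theorem grow {x : RTerm n} (hx : botFree x) {V V' : Finset (Fin n)}
    (h : varsf x ∪ V = varsf x ∪ V') : x.add (zcan V) ~~ x.add (zcan V') := by
  have key : ∀ W : Finset (Fin n), x.add (zcan W) ~~ x.add (zcan (varsf x ∪ W)) := by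
    intro W
    calc x.add (zcan W) ~~ (x.add (zero.mul x)).add (zcan W) := add_congr (absorb x).symm (refl _)
      _ ~~ x.add ((zero.mul x).add (zcan W)) := add_assoc _ _ _
      _ ~~ x.add ((zcan (varsf x)).add (zcan W)) := add_congr (refl x) (add_congr (zq x hx) (refl _))
      _ ~~ x.add (zcan (varsf x ∪ W)) := add_congr (refl x) (jmerge _ _)
  exact ((key V).trans (by rw [h]; exact refl _)).trans (key V').symm

theorem absorb_all {x : RTerm n} (hx : botFree x) {V : Finset (Fin n)}
    (h : V ⊆ varsf x) : x.add (zcan V) ~~ x := by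
  have := grow hx (V := V) (V' := ∅) (by simp [Finset.union_eq_left.mpr h])
  exact (this.trans (add_congr (refl x) zcan_empty)).trans (add_zero x)

end DerivWcr
end RTerm

namespace RTerm

variable {n : ℕ}

local infix:50 " ~~ " => DerivWcr

namespace DerivWcr

theorem mul_mul_mul_comm (a b c d : RTerm n) :
    (a.mul b).mul (c.mul d) ~~ (a.mul c).mul (b.mul d) :=
  calc (a.mul b).mul (c.mul d) ~~ a.mul (b.mul (c.mul d)) := (mul_assoc a b (c.mul d)).symm
    _ ~~ a.mul (c.mul (b.mul d)) := mul_congr (refl a) (mul_left_comm b c d)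
    _ ~~ (a.mul c).mul (b.mul d) := mul_assoc a c (b.mul d)

theorem zmul_closed {x : RTerm n} (hb : botFree x) (hv : varsf x = ∅) :
    zero.mul x ~~ zero := by
  refine (zq x hb).trans ?_
  rw [hv]
  exact zcan_empty

/-- `natNumeral (k+1) = natNumeral k + 1` -/
theorem natNumeral_succ : ∀ k : ℕ, natNumeral n (k + 1) ~~ (natNumeral n k).add one
  | 0 => (zero_add one).symm
  | _ + 1 => refl _

theorem botFree_natNumeral : ∀ k : ℕ, botFree (natNumeral n k)
  | 0 => trivial
  | 1 => trivial
  | k + 2 => ⟨botFree_natNumeral (k + 1), trivial⟩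

theorem varsf_natNumeral : ∀ k : ℕ, varsf (natNumeral n k) = ∅
  | 0 => rfl
  | 1 => rfl
  | k + 2 => by
    show varsf (natNumeral n (k + 1)) ∪ ∅ = ∅
    rw [varsf_natNumeral (k + 1)]; simp

theorem botFree_intNumeral (c : ℤ) : botFree (intNumeral n c) := by
  rw [intNumeral]; split
  · exact botFree_natNumeral _
  · exact botFree_natNumeral _

theorem varsf_intNumeral (c : ℤ) : varsf (intNumeral n c) = ∅ := by
  rw [intNumeral]; split
  · exact varsf_natNumeral _
  · exact varsf_natNumeral _

theorem natNumeral_add : ∀ (a b : ℕ), (natNumeral n a).add (natNumeral n b) ~~ natNumeral n (a + b)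
  | a, 0 => add_zero _
  | a, b + 1 =>
    calc (natNumeral n a).add (natNumeral n (b + 1))
        ~~ (natNumeral n a).add ((natNumeral n b).add one) :=
          add_congr (refl _) (natNumeral_succ b)
      _ ~~ ((natNumeral n a).add (natNumeral n b)).add one := (add_assoc _ _ _).symm
      _ ~~ (natNumeral n (a + b)).add one := add_congr (natNumeral_add a b) (refl one)
      _ ~~ natNumeral n (a + b + 1) := (natNumeral_succ (a + b)).symm

theorem natNumeral_mul : ∀ (a b : ℕ), (natNumeral n a).mul (natNumeral n b) ~~ natNumeral n (a * b)
  | a, 0 =>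
    calc (natNumeral n a).mul zero ~~ zero.mul (natNumeral n a) := mul_comm _ _
      _ ~~ zero := zmul_closed (botFree_natNumeral a) (varsf_natNumeral a)
  | a, b + 1 =>
    calc (natNumeral n a).mul (natNumeral n (b + 1))
        ~~ (natNumeral n a).mul ((natNumeral n b).add one) :=
          mul_congr (refl _) (natNumeral_succ b)
      _ ~~ ((natNumeral n a).mul (natNumeral n b)).add ((natNumeral n a).mul one) := mul_add _ _ _
      _ ~~ (natNumeral n (a * b)).add (natNumeral n a) :=
          add_congr (natNumeral_mul a b) (mul_one _)
      _ ~~ natNumeral n (a * b + a) := natNumeral_add _ _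
      _ ~~ natNumeral n (a * (b + 1)) := by rw [Nat.mul_succ]; exact refl _

theorem intNumeral_natCast (k : ℕ) : intNumeral n (k : ℤ) = natNumeral n k := by
  rw [intNumeral, if_pos (Int.natCast_nonneg k), Int.toNat_natCast]

theorem intNumeral_neg (c : ℤ) : intNumeral n (-c) ~~ (intNumeral n c).neg := by
  rcases lt_trichotomy c 0 with h | rfl | h
  · rw [intNumeral, if_pos (by omega), intNumeral, if_neg (by omega)]
    exact (neg_neg _).symm
  · show intNumeral n 0 ~~ (intNumeral n 0).neg
    rw [show intNumeral n 0 = zero from rfl]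
    exact neg_zero.symm
  · rw [intNumeral, if_neg (by omega), intNumeral, if_pos (by omega),
      show (- -c) = c from _root_.neg_neg c]
    exact refl _

theorem natNumeral_sub : ∀ (q p : ℕ),
    (natNumeral n p).add (natNumeral n q).neg ~~ intNumeral n ((p : ℤ) - q)
  | 0, p => by
    rw [show (p : ℤ) - ((0 : ℕ) : ℤ) = ((p : ℕ) : ℤ) by push_cast; ring, intNumeral_natCast]
    exact (add_congr (refl _) neg_zero).trans (add_zero _)
  | q + 1, 0 => by
    refine (zero_add _).trans ?_
    rw [show ((0 : ℕ) : ℤ) - ((q + 1 : ℕ) : ℤ) = -((q + 1 : ℕ) : ℤ) by push_cast; ring]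
    refine DerivWcr.trans ?_ (intNumeral_neg _).symm
    rw [intNumeral_natCast]
    exact refl _
  | q + 1, p + 1 =>
    calc (natNumeral n (p + 1)).add (natNumeral n (q + 1)).neg
        ~~ ((natNumeral n p).add one).add ((natNumeral n q).add one).neg :=
          add_congr (natNumeral_succ p) (neg_congr (natNumeral_succ q))
      _ ~~ ((natNumeral n p).add one).add ((natNumeral n q).neg.add one.neg) :=
          add_congr (refl _) (neg_add _ _)
      _ ~~ (natNumeral n p).add (one.add ((natNumeral n q).neg.add one.neg)) := add_assoc _ _ _
      _ ~~ (natNumeral n p).add ((natNumeral n q).neg.add (one.add one.neg)) :=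
          add_congr (refl _) (add_left_comm _ _ _)
      _ ~~ ((natNumeral n p).add (natNumeral n q).neg).add (one.add one.neg) :=
          (add_assoc _ _ _).symm
      _ ~~ (intNumeral n ((p : ℤ) - q)).add (zero.mul one) :=
          add_congr (natNumeral_sub q p) (add_neg one)
      _ ~~ (intNumeral n ((p : ℤ) - q)).add zero := add_congr (refl _) zero_mul_one
      _ ~~ intNumeral n ((p : ℤ) - q) := add_zero _
      _ ~~ intNumeral n ((p + 1 : ℕ) - (q + 1 : ℕ) : ℤ) := by
          rw [show ((p + 1 : ℕ) : ℤ) - ((q + 1 : ℕ) : ℤ) = (p : ℤ) - q by push_cast; ring]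
          exact refl _

theorem intNumeral_add (a b : ℤ) :
    (intNumeral n a).add (intNumeral n b) ~~ intNumeral n (a + b) := by
  rcases le_or_gt 0 a with ha | ha <;> rcases le_or_gt 0 b with hb | hb
  · rw [intNumeral, if_pos ha, intNumeral, if_pos hb]
    refine (natNumeral_add _ _).trans ?_
    rw [show a.toNat + b.toNat = (a + b).toNat by omega, intNumeral, if_pos (by omega)]
    exact refl _
  · rw [intNumeral, if_pos ha, intNumeral, if_neg (by omega)]
    refine (natNumeral_sub (-b).toNat a.toNat).trans ?_
    rw [show (a.toNat : ℤ) - ((-b).toNat : ℤ) = a + b by omega]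
    exact refl _
  · rw [intNumeral, if_neg (by omega), intNumeral, if_pos hb]
    refine (add_comm _ _).trans ?_
    refine (natNumeral_sub (-a).toNat b.toNat).trans ?_
    rw [show (b.toNat : ℤ) - ((-a).toNat : ℤ) = a + b by omega]
    exact refl _
  · rw [intNumeral, if_neg (by omega), intNumeral, if_neg (by omega),
      intNumeral, if_neg (by omega)]
    refine ((neg_add _ _).symm).trans ?_
    refine (neg_congr ((natNumeral_add _ _).trans ?_)).trans (refl _)
    rw [show (-a).toNat + (-b).toNat = (-(a + b)).toNat by omega]
    exact refl _

theorem neg_mul_neg (x y : RTerm n) : x.neg.mul y.neg ~~ x.mul y :=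
  calc x.neg.mul y.neg ~~ (x.mul y.neg).neg := (neg_mul x y.neg).symm
    _ ~~ (y.neg.mul x).neg := neg_congr (mul_comm _ _)
    _ ~~ (y.mul x).neg.neg := neg_congr (neg_mul y x).symm
    _ ~~ y.mul x := neg_neg _
    _ ~~ x.mul y := mul_comm _ _

theorem intNumeral_mul (a b : ℤ) :
    (intNumeral n a).mul (intNumeral n b) ~~ intNumeral n (a * b) := by
  rcases le_or_gt 0 a with ha | ha <;> rcases le_or_gt 0 b with hb | hb
  · rw [intNumeral, if_pos ha, intNumeral, if_pos hb]
    refine (natNumeral_mul _ _).trans ?_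
    have hmul : a.toNat * b.toNat = (a * b).toNat := by
      have h : ((a.toNat * b.toNat : ℕ) : ℤ) = (((a * b).toNat : ℕ) : ℤ) := by
        push_cast [Int.toNat_of_nonneg ha, Int.toNat_of_nonneg hb,
          Int.toNat_of_nonneg (mul_nonneg ha hb)]
        ring
      exact_mod_cast h
    rw [hmul, intNumeral, if_pos (mul_nonneg ha hb)]
    exact refl _
  · rw [intNumeral, if_pos ha, intNumeral, if_neg (by omega)]
    refine (mul_comm _ _).trans ?_
    refine ((neg_mul _ _).symm).trans ?_
    refine (neg_congr ((mul_comm _ _).trans (natNumeral_mul a.toNat (-b).toNat))).trans ?_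
    refine DerivWcr.trans ?_ (intNumeral_neg (a * -b)).symm |>.trans (by
      rw [show -(a * -b) = a * b by ring]; exact refl _)
    rw [show ((a * -b : ℤ)) = ((a.toNat * (-b).toNat : ℕ) : ℤ) by
      push_cast; rw [Int.toNat_of_nonneg ha, Int.toNat_of_nonneg (by omega)],
      intNumeral_natCast]
    exact refl _
  · rw [intNumeral, if_neg (by omega), intNumeral, if_pos hb]
    refine ((neg_mul _ _).symm).trans ?_
    refine (neg_congr (natNumeral_mul (-a).toNat b.toNat)).trans ?_
    refine DerivWcr.trans ?_ (intNumeral_neg (-a * b)).symm |>.trans (by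
      rw [show -(-a * b) = a * b by ring]; exact refl _)
    rw [show ((-a * b : ℤ)) = (((-a).toNat * b.toNat : ℕ) : ℤ) by
      push_cast; rw [Int.toNat_of_nonneg (by omega), Int.toNat_of_nonneg hb],
      intNumeral_natCast]
    exact refl _
  · rw [intNumeral, if_neg (by omega), intNumeral, if_neg (by omega)]
    refine (neg_mul_neg _ _).trans ?_
    refine (natNumeral_mul (-a).toNat (-b).toNat).trans ?_
    have ha' : (0 : ℤ) ≤ -a := by omega
    have hb' : (0 : ℤ) ≤ -b := by omega
    have hab : (0 : ℤ) ≤ a * b := le_of_lt (mul_pos_of_neg_of_neg ha hb)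
    have hmul : (-a).toNat * (-b).toNat = (a * b).toNat := by
      have h : (((-a).toNat * (-b).toNat : ℕ) : ℤ) = (((a * b).toNat : ℕ) : ℤ) := by
        push_cast [Int.toNat_of_nonneg ha', Int.toNat_of_nonneg hb', Int.toNat_of_nonneg hab]
        ring
      exact_mod_cast h
    rw [hmul, intNumeral, if_pos hab]
    exact refl _

/-- `pow x (k+1) = pow x k · x` -/
theorem pow_succ' : ∀ (x : RTerm n) (k : ℕ), x.pow (k + 1) ~~ (x.pow k).mul x
  | x, 0 => (one_mul x).symm
  | x, k + 1 => refl _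

theorem pow_add (x : RTerm n) : ∀ (a b : ℕ), (x.pow a).mul (x.pow b) ~~ x.pow (a + b)
  | a, 0 => mul_one _
  | a, b + 1 =>
    calc (x.pow a).mul (x.pow (b + 1)) ~~ (x.pow a).mul ((x.pow b).mul x) :=
          mul_congr (refl _) (pow_succ' x b)
      _ ~~ ((x.pow a).mul (x.pow b)).mul x := mul_assoc _ _ _
      _ ~~ (x.pow (a + b)).mul x := mul_congr (pow_add x a b) (refl x)
      _ ~~ x.pow (a + b + 1) := (pow_succ' x (a + b)).symm

theorem prodF_mul_prodF {ι : Type} (f g : ι → RTerm n) :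
    ∀ l : List ι, (prodF (l.map f)).mul (prodF (l.map g)) ~~
      prodF (l.map fun i => (f i).mul (g i))
  | [] => one_mul one
  | a :: l =>
    calc ((f a).mul (prodF (l.map f))).mul ((g a).mul (prodF (l.map g)))
        ~~ ((f a).mul (g a)).mul ((prodF (l.map f)).mul (prodF (l.map g))) :=
          mul_mul_mul_comm _ _ _ _
      _ ~~ ((f a).mul (g a)).mul (prodF (l.map fun i => (f i).mul (g i))) :=
          mul_congr (refl _) (prodF_mul_prodF f g l)

theorem monTerm_eq_prodF (d : Fin n →₀ ℕ) :
    monTerm d = prodF ((List.finRange n).map fun i => (var i).pow (d i)) := rfl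

theorem monTerm_mul (d e : Fin n →₀ ℕ) :
    (monTerm d).mul (monTerm e) ~~ monTerm (d + e) := by
  rw [monTerm_eq_prodF, monTerm_eq_prodF, monTerm_eq_prodF]
  refine (prodF_mul_prodF _ _ _).trans ?_
  have : ((List.finRange n).map fun i => ((var i).pow (d i)).mul ((var i).pow (e i)))
      = (List.finRange n).map (fun i => ((var i).pow (d i)).mul ((var i).pow (e i))) := rfl
  refine pcong ?_
  rw [List.forall₂_map_right_iff, List.forall₂_map_left_iff]
  refine List.forall₂_same.mpr fun i _ => ?_
  rw [Finsupp.add_apply]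
  exact pow_add (var i) (d i) (e i)

theorem prodF_ones {l : List (RTerm n)} (h : ∀ x ∈ l, x ~~ one) : prodF l ~~ one := by
  induction l with
  | nil => exact refl one
  | cons a l ih =>
    exact (mul_congr (h a (List.mem_cons_self))
      (ih fun x hx => h x (List.mem_cons_of_mem a hx))).trans (one_mul one)

theorem monTerm_zero : (monTerm (0 : Fin n →₀ ℕ)) ~~ one := by
  rw [monTerm_eq_prodF]
  refine prodF_ones fun x hx => ?_
  rcases List.mem_map.mp hx with ⟨i, _, rfl⟩
  rw [Finsupp.coe_zero, Pi.zero_apply]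
  exact refl one

theorem monTerm_single (i : Fin n) : monTerm (Finsupp.single i 1) ~~ var i := by
  rw [monTerm_eq_prodF]
  have key : ∀ l : List (Fin n), l.Nodup → i ∈ l →
      prodF (l.map fun j => (var j).pow (Finsupp.single i 1 j)) ~~ var i := by
    intro l
    induction l with
    | nil => intro _ h; exact absurd h List.not_mem_nil
    | cons a l ih =>
      intro hnd hmem
      rcases List.mem_cons.mp hmem with rfl | hmem'
      · have h1 : Finsupp.single i 1 i = 1 := Finsupp.single_eq_same
        rw [List.map_cons, prodF_cons, h1]
        refine DerivWcr.trans (mul_congr (refl _) (prodF_ones fun x hx => ?_)) ?_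
        · rcases List.mem_map.mp hx with ⟨j, hj, rfl⟩
          have : Finsupp.single i 1 j = 0 :=
            Finsupp.single_eq_of_ne fun hij => (List.nodup_cons.mp hnd).1 (hij ▸ hj)
          rw [this]
          exact refl one
        · exact mul_one _
      · have ha : Finsupp.single i 1 a = 0 :=
          Finsupp.single_eq_of_ne fun hij => (List.nodup_cons.mp hnd).1 (hij ▸ hmem')
        rw [List.map_cons, prodF_cons, ha]
        exact (one_mul _).trans (ih (List.nodup_cons.mp hnd).2 hmem')
  exact key (List.finRange n) (List.nodup_finRange n) (List.mem_finRange i)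

theorem mem_varsf_prodF {j : Fin n} : ∀ {l : List (RTerm n)},
    j ∈ varsf (prodF l) ↔ ∃ x ∈ l, j ∈ varsf x
  | [] => by simp
  | a :: l => by
    rw [prodF_cons, varsf_mul, Finset.mem_union]
    simp [mem_varsf_prodF (l := l)]

theorem varsf_pow (x : RTerm n) : ∀ k : ℕ, varsf (x.pow k) = if k = 0 then ∅ else varsf x
  | 0 => rfl
  | 1 => by simp [pow]
  | k + 2 => by
    show varsf (x.pow (k + 1)) ∪ varsf x = _
    rw [varsf_pow x (k + 1)]
    simp

theorem varsf_monTerm (d : Fin n →₀ ℕ) : varsf (monTerm d) = d.support := by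
  ext j
  rw [monTerm_eq_prodF, mem_varsf_prodF]
  constructor
  · rintro ⟨x, hx, hj⟩
    rcases List.mem_map.mp hx with ⟨i, _, rfl⟩
    rw [varsf_pow] at hj
    split at hj
    · simp at hj
    · next h =>
      simp only [varsf_var, Finset.mem_singleton] at hj
      subst hj
      exact Finsupp.mem_support_iff.mpr h
  · intro hj
    refine ⟨(var j).pow (d j), List.mem_map.mpr ⟨j, List.mem_finRange j, rfl⟩, ?_⟩
    rw [varsf_pow, if_neg (Finsupp.mem_support_iff.mp hj)]
    simp

theorem botFree_pow (x : RTerm n) (hx : botFree x) : ∀ k : ℕ, botFree (x.pow k)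
  | 0 => trivial
  | 1 => hx
  | k + 2 => ⟨botFree_pow x hx (k + 1), hx⟩

theorem botFree_monTerm (d : Fin n →₀ ℕ) : botFree (monTerm d) := by
  rw [monTerm_eq_prodF]
  refine botFree_prodF fun x hx => ?_
  rcases List.mem_map.mp hx with ⟨i, _, rfl⟩
  exact botFree_pow _ (by trivial) _

end DerivWcr
end RTerm

namespace RTerm

open MvPolynomial

variable {n : ℕ}

local infix:50 " ~~ " => DerivWcr

/-- a coefficient–monomial summand -/
noncomputable def mTerm (c : ℤ) (d : Fin n →₀ ℕ) : RTerm n :=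
  (intNumeral n c).mul (monTerm d)

theorem polyTerm_def (α : MvPolynomial (Fin n) ℤ) :
    polyTerm α = sumL (α.support.toList.map fun d => mTerm (α.coeff d) d) := rfl

/-- polynomial represented by a list of coefficient–monomial pairs -/
noncomputable def polyOf (L : List (ℤ × (Fin n →₀ ℕ))) : MvPolynomial (Fin n) ℤ :=
  (L.map fun p => (monomial p.2 p.1 : MvPolynomial (Fin n) ℤ)).sum

/-- variables occurring in a list of coefficient–monomial pairs -/
def varsOf (L : List (ℤ × (Fin n →₀ ℕ))) : Finset (Fin n) :=
  L.foldr (fun p acc => p.2.support ∪ acc) ∅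

@[simp] theorem polyOf_nil : (polyOf [] : MvPolynomial (Fin n) ℤ) = 0 := rfl
@[simp] theorem polyOf_cons (p : ℤ × (Fin n →₀ ℕ)) (L) :
    polyOf (p :: L) = monomial p.2 p.1 + polyOf L := by
  simp [polyOf]
@[simp] theorem varsOf_nil : (varsOf [] : Finset (Fin n)) = ∅ := rfl
@[simp] theorem varsOf_cons (p : ℤ × (Fin n →₀ ℕ)) (L) :
    varsOf (p :: L) = p.2.support ∪ varsOf L := rfl

theorem mem_varsOf {j : Fin n} : ∀ {L : List (ℤ × (Fin n →₀ ℕ))},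
    j ∈ varsOf L ↔ ∃ p ∈ L, j ∈ p.2.support
  | [] => by simp
  | p :: L => by
    rw [varsOf_cons, Finset.mem_union]
    simp [mem_varsOf (L := L)]

theorem vars_polyOf_subset : ∀ L : List (ℤ × (Fin n →₀ ℕ)), (polyOf L).vars ⊆ varsOf L
  | [] => by simp
  | p :: L => by
    rw [polyOf_cons, varsOf_cons]
    intro j hj
    rcases Finset.mem_union.mp (vars_add_subset _ _ hj) with h | h
    · rcases eq_or_ne p.1 0 with h0 | h0
      · rw [h0, monomial_zero, vars_0] at h; simp at h
      · rw [vars_monomial h0] at h; exact Finset.mem_union_left _ h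
    · exact Finset.mem_union_right _ (vars_polyOf_subset L h)

namespace DerivWcr

theorem mem_varsf_sumL {j : Fin n} : ∀ {l : List (RTerm n)},
    j ∈ varsf (sumL l) ↔ ∃ x ∈ l, j ∈ varsf x
  | [] => by simp
  | a :: l => by
    rw [sumL_cons, varsf_add, Finset.mem_union]
    simp [mem_varsf_sumL (l := l)]

theorem varsf_mTerm (c : ℤ) (d : Fin n →₀ ℕ) : varsf (mTerm c d) = d.support := by
  rw [mTerm, varsf_mul, varsf_intNumeral, varsf_monTerm, Finset.empty_union]

theorem botFree_mTerm (c : ℤ) (d : Fin n →₀ ℕ) : botFree (mTerm c d) :=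
  ⟨botFree_intNumeral c, botFree_monTerm d⟩

theorem botFree_sumL {l : List (RTerm n)} (h : ∀ x ∈ l, botFree x) : botFree (sumL l) := by
  induction l with
  | nil => trivial
  | cons a l ih =>
    exact ⟨h a (List.mem_cons_self), ih fun x hx => h x (List.mem_cons_of_mem a hx)⟩

theorem botFree_polyTerm (α : MvPolynomial (Fin n) ℤ) : botFree (polyTerm α) := by
  rw [polyTerm_def]
  refine botFree_sumL fun x hx => ?_
  rcases List.mem_map.mp hx with ⟨d, _, rfl⟩
  exact botFree_mTerm _ _

theorem varsf_polyTerm (α : MvPolynomial (Fin n) ℤ) : varsf (polyTerm α) = α.vars := by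
  ext j
  rw [polyTerm_def, mem_varsf_sumL, mem_vars]
  constructor
  · rintro ⟨x, hx, hj⟩
    rcases List.mem_map.mp hx with ⟨d, hd, rfl⟩
    rw [varsf_mTerm] at hj
    exact ⟨d, Finset.mem_toList.mp hd, hj⟩
  · rintro ⟨d, hd, hj⟩
    exact ⟨mTerm (α.coeff d) d, List.mem_map.mpr ⟨d, Finset.mem_toList.mpr hd, rfl⟩,
      by rw [varsf_mTerm]; exact hj⟩

theorem polyTerm_zero : polyTerm (0 : MvPolynomial (Fin n) ℤ) = zero := by
  rw [polyTerm_def, support_zero, Finset.toList_empty, List.map_nil, sumL_nil]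

/-- inserting a fresh monomial -/
theorem polyTerm_insert {c : ℤ} (hc : c ≠ 0) {d : Fin n →₀ ℕ} {β : MvPolynomial (Fin n) ℤ}
    (hd : d ∉ β.support) :
    polyTerm (monomial d c + β) ~~ (mTerm c d).add (polyTerm β) := by
  set γ := monomial d c + β with hγ
  have hcd : γ.coeff d = c := by
    rw [hγ, coeff_add, coeff_monomial, if_pos rfl, notMem_support_iff.mp hd, _root_.add_zero]
  have hce : ∀ e, e ≠ d → γ.coeff e = β.coeff e := fun e he => by
    rw [hγ, coeff_add, coeff_monomial, if_neg (fun h => he h.symm), _root_.zero_add]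
  have hsupp : γ.support = insert d β.support := by
    ext e
    rcases eq_or_ne e d with rfl | he
    · simp [mem_support_iff, hcd, hc]
    · simp [mem_support_iff, hce e he, he]
  rw [polyTerm_def, hsupp]
  refine (sperm ((Finset.toList_insert hd).map _)).trans ?_
  rw [List.map_cons, sumL_cons, hcd]
  refine add_congr (refl _) ?_
  rw [polyTerm_def]
  have : β.support.toList.map (fun e => mTerm (γ.coeff e) e)
      = β.support.toList.map (fun e => mTerm (β.coeff e) e) := by
    refine List.map_congr_left fun e he => ?_
    rw [hce e fun h => hd (h ▸ Finset.mem_toList.mp he)]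
  rw [this]
  exact refl _

/-- extracting a monomial present in the support -/
theorem polyTerm_extract {d : Fin n →₀ ℕ} {β : MvPolynomial (Fin n) ℤ} (hd : d ∈ β.support) :
    polyTerm β ~~ (mTerm (β.coeff d) d).add (polyTerm (β - monomial d (β.coeff d))) := by
  have hc : β.coeff d ≠ 0 := mem_support_iff.mp hd
  have hd' : d ∉ (β - monomial d (β.coeff d)).support := by
    rw [notMem_support_iff, coeff_sub, coeff_monomial, if_pos rfl, sub_self]
  have hβ : monomial d (β.coeff d) + (β - monomial d (β.coeff d)) = β := by ring
  calc polyTerm β ~~ polyTerm (monomial d (β.coeff d) + (β - monomial d (β.coeff d))) := by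
        rw [hβ]; exact refl _
    _ ~~ (mTerm (β.coeff d) d).add (polyTerm (β - monomial d (β.coeff d))) :=
        polyTerm_insert hc hd'

/-- combining two summands with the same monomial -/
theorem mTerm_combine (c b : ℤ) (d : Fin n →₀ ℕ) :
    (mTerm c d).add (mTerm b d) ~~ mTerm (c + b) d :=
  calc (mTerm c d).add (mTerm b d)
      ~~ ((monTerm d).mul (intNumeral n c)).add ((monTerm d).mul (intNumeral n b)) :=
        add_congr (mul_comm _ _) (mul_comm _ _)
    _ ~~ (monTerm d).mul ((intNumeral n c).add (intNumeral n b)) := (mul_add _ _ _).symm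
    _ ~~ (monTerm d).mul (intNumeral n (c + b)) := mul_congr (refl _) (intNumeral_add c b)
    _ ~~ mTerm (c + b) d := mul_comm _ _

/-- a zero summand is a `0·_` part -/
theorem mTerm_zero_coeff (d : Fin n →₀ ℕ) : mTerm 0 d ~~ zcan d.support := by
  have : mTerm 0 d = zero.mul (monTerm d) := rfl
  rw [this]
  refine (zq _ (botFree_monTerm d)).trans ?_
  rw [varsf_monTerm]
  exact refl _

/-- the key step: adding one coefficient–monomial summand to a normal form -/
theorem step (c : ℤ) (d : Fin n →₀ ℕ) (β : MvPolynomial (Fin n) ℤ) (W : Finset (Fin n))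
    (hW : β.vars ⊆ W) :
    (mTerm c d).add ((polyTerm β).add (zcan W)) ~~
      (polyTerm (monomial d c + β)).add (zcan (d.support ∪ W)) := by
  have habs : ∀ (γ : MvPolynomial (Fin n) ℤ), d.support ⊆ γ.vars →
      (polyTerm γ).add (zcan W) ~~ (polyTerm γ).add (zcan (d.support ∪ W)) := by
    intro γ hγ
    refine grow (botFree_polyTerm γ) ?_
    rw [varsf_polyTerm]
    rw [← Finset.union_assoc, Finset.union_eq_left.mpr hγ]
  rcases eq_or_ne c 0 with rfl | hc
  · rw [show (monomial d (0 : ℤ) : MvPolynomial (Fin n) ℤ) = 0 by simp, _root_.zero_add]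
    calc (mTerm 0 d).add ((polyTerm β).add (zcan W))
        ~~ (zcan d.support).add ((polyTerm β).add (zcan W)) :=
          add_congr (mTerm_zero_coeff d) (refl _)
      _ ~~ (polyTerm β).add ((zcan d.support).add (zcan W)) := add_left_comm _ _ _
      _ ~~ (polyTerm β).add (zcan (d.support ∪ W)) := add_congr (refl _) (jmerge _ _)
  by_cases hd : d ∈ β.support
  case neg =>
    -- fresh monomial
    have hmem : d ∈ (monomial d c + β).support := by
      rw [mem_support_iff, coeff_add, coeff_monomial, if_pos rfl,
        notMem_support_iff.mp hd, _root_.add_zero]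
      exact hc
    calc (mTerm c d).add ((polyTerm β).add (zcan W))
        ~~ ((mTerm c d).add (polyTerm β)).add (zcan W) := (add_assoc _ _ _).symm
      _ ~~ (polyTerm (monomial d c + β)).add (zcan W) :=
          add_congr (polyTerm_insert hc hd).symm (refl _)
      _ ~~ (polyTerm (monomial d c + β)).add (zcan (d.support ∪ W)) :=
          habs _ fun j hj => mem_vars j |>.mpr ⟨d, hmem, hj⟩
  case pos =>
    set b := β.coeff d with hb
    set βm := β - monomial d b with hβm
    have hdm : d ∉ βm.support := by
      rw [hβm, notMem_support_iff, coeff_sub, coeff_monomial, if_pos rfl, hb, sub_self]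
    have hstep1 : (mTerm c d).add ((polyTerm β).add (zcan W)) ~~
        ((mTerm (c + b) d).add (polyTerm βm)).add (zcan W) :=
      calc (mTerm c d).add ((polyTerm β).add (zcan W))
          ~~ (mTerm c d).add (((mTerm b d).add (polyTerm βm)).add (zcan W)) :=
            add_congr (refl _) (add_congr (polyTerm_extract hd) (refl _))
        _ ~~ ((mTerm c d).add ((mTerm b d).add (polyTerm βm))).add (zcan W) :=
            (add_assoc _ _ _).symm
        _ ~~ (((mTerm c d).add (mTerm b d)).add (polyTerm βm)).add (zcan W) :=
            add_congr (add_assoc _ _ _).symm (refl _)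
        _ ~~ ((mTerm (c + b) d).add (polyTerm βm)).add (zcan W) :=
            add_congr (add_congr (mTerm_combine c b d) (refl _)) (refl _)
    have hγ : monomial d c + β = monomial d (c + b) + βm := by
      rw [hβm, hb]
      rw [map_add]
      ring
    rcases eq_or_ne (c + b) 0 with hcb | hcb
    · -- cancellation
      have hγ' : monomial d c + β = βm := by rw [hγ, hcb, map_zero, _root_.zero_add]
      rw [hγ']
      refine hstep1.trans ?_
      calc ((mTerm (c + b) d).add (polyTerm βm)).add (zcan W)
          ~~ ((zcan d.support).add (polyTerm βm)).add (zcan W) := by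
            rw [hcb]
            exact add_congr (add_congr (mTerm_zero_coeff d) (refl _)) (refl _)
        _ ~~ ((polyTerm βm).add (zcan d.support)).add (zcan W) :=
            add_congr (add_comm _ _) (refl _)
        _ ~~ (polyTerm βm).add ((zcan d.support).add (zcan W)) := add_assoc _ _ _
        _ ~~ (polyTerm βm).add (zcan (d.support ∪ W)) := add_congr (refl _) (jmerge _ _)
    · -- merged coefficient nonzero
      have hmem : d ∈ (monomial d c + β).support := by
        rw [mem_support_iff, coeff_add, coeff_monomial, if_pos rfl, ← hb]
        exact fun h => hcb h
      refine hstep1.trans ?_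
      calc ((mTerm (c + b) d).add (polyTerm βm)).add (zcan W)
          ~~ (polyTerm (monomial d (c + b) + βm)).add (zcan W) :=
            add_congr (polyTerm_insert hcb hdm).symm (refl _)
        _ ~~ (polyTerm (monomial d c + β)).add (zcan W) := by rw [← hγ]; exact refl _
        _ ~~ (polyTerm (monomial d c + β)).add (zcan (d.support ∪ W)) :=
            habs _ fun j hj => mem_vars j |>.mpr ⟨d, hmem, hj⟩

/-- the general normalisation of a list of coefficient–monomial summands -/
theorem gen : ∀ L : List (ℤ × (Fin n →₀ ℕ)),
    sumL (L.map fun p => mTerm p.1 p.2) ~~ (polyTerm (polyOf L)).add (zcan (varsOf L))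
  | [] => by
    rw [List.map_nil, sumL_nil, polyOf_nil, polyTerm_zero, varsOf_nil]
    exact ((add_zero zero).symm).trans (add_congr (refl _) zcan_empty.symm)
  | p :: L => by
    rw [List.map_cons, sumL_cons, polyOf_cons, varsOf_cons]
    calc (mTerm p.1 p.2).add (sumL (L.map fun p => mTerm p.1 p.2))
        ~~ (mTerm p.1 p.2).add ((polyTerm (polyOf L)).add (zcan (varsOf L))) :=
          add_congr (refl _) (gen L)
      _ ~~ (polyTerm (monomial p.2 p.1 + polyOf L)).add (zcan (p.2.support ∪ varsOf L)) :=
          step p.1 p.2 (polyOf L) (varsOf L) (vars_polyOf_subset L)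

end DerivWcr
end RTerm

namespace RTerm

open MvPolynomial

variable {n : ℕ}

local infix:50 " ~~ " => DerivWcr

/-- the coefficient–monomial list of a polynomial -/
noncomputable def suppList (α : MvPolynomial (Fin n) ℤ) : List (ℤ × (Fin n →₀ ℕ)) :=
  α.support.toList.map fun d => (α.coeff d, d)

theorem suppList_map_mTerm (α : MvPolynomial (Fin n) ℤ) :
    (suppList α).map (fun p => mTerm p.1 p.2) =
      α.support.toList.map fun d => mTerm (α.coeff d) d := by
  rw [suppList, List.map_map]; rfl

theorem polyTerm_eq_sumL (α : MvPolynomial (Fin n) ℤ) :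
    polyTerm α = sumL ((suppList α).map fun p => mTerm p.1 p.2) := by
  rw [suppList_map_mTerm, polyTerm_def]

theorem polyOf_append (L1 L2 : List (ℤ × (Fin n →₀ ℕ))) :
    polyOf (L1 ++ L2) = polyOf L1 + polyOf L2 := by
  rw [polyOf, polyOf, polyOf, List.map_append, List.sum_append]

theorem varsOf_append : ∀ L1 L2 : List (ℤ × (Fin n →₀ ℕ)),
    varsOf (L1 ++ L2) = varsOf L1 ∪ varsOf L2
  | [], L2 => by rw [List.nil_append, varsOf_nil, Finset.empty_union]
  | p :: L1, L2 => by
    rw [List.cons_append, varsOf_cons, varsOf_cons, varsOf_append L1 L2, Finset.union_assoc]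

theorem polyOf_suppList (α : MvPolynomial (Fin n) ℤ) : polyOf (suppList α) = α := by
  rw [polyOf, suppList, List.map_map]
  have : ((fun p : ℤ × (Fin n →₀ ℕ) => (monomial p.2 p.1 : MvPolynomial (Fin n) ℤ)) ∘
      fun d => (α.coeff d, d)) = fun d => (monomial d (α.coeff d) : MvPolynomial (Fin n) ℤ) := rfl
  rw [this, Finset.sum_map_toList]
  exact support_sum_monomial_coeff α

theorem varsOf_suppList (α : MvPolynomial (Fin n) ℤ) : varsOf (suppList α) = α.vars := by
  ext j
  rw [mem_varsOf, mem_vars]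
  constructor
  · rintro ⟨p, hp, hj⟩
    rcases List.mem_map.mp hp with ⟨d, hd, rfl⟩
    exact ⟨d, Finset.mem_toList.mp hd, hj⟩
  · rintro ⟨d, hd, hj⟩
    exact ⟨(α.coeff d, d), List.mem_map.mpr ⟨d, Finset.mem_toList.mpr hd, rfl⟩, hj⟩

namespace DerivWcr

theorem add_add_add_comm (a b c d : RTerm n) :
    (a.add b).add (c.add d) ~~ (a.add c).add (b.add d) :=
  calc (a.add b).add (c.add d) ~~ a.add (b.add (c.add d)) := add_assoc _ _ _
    _ ~~ a.add (c.add (b.add d)) := add_congr (refl a) (add_left_comm b c d)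
    _ ~~ (a.add c).add (b.add d) := (add_assoc a c (b.add d)).symm

theorem neg_zcan (W : Finset (Fin n)) : (zcan W).neg ~~ zcan W :=
  ((neg_mul zero _).trans (mul_congr neg_zero (refl _)))

theorem sumL_neg : ∀ l : List (RTerm n), (sumL l).neg ~~ sumL (l.map neg)
  | [] => neg_zero
  | a :: l => (neg_add a (sumL l)).trans (add_congr (refl a.neg) (sumL_neg l))

theorem mTerm_neg (c : ℤ) (d : Fin n →₀ ℕ) : (mTerm c d).neg ~~ mTerm (-c) d :=
  (neg_mul _ _).trans (mul_congr (intNumeral_neg c).symm (refl _))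

theorem polyTerm_neg (α : MvPolynomial (Fin n) ℤ) : (polyTerm α).neg ~~ polyTerm (-α) := by
  rw [polyTerm_def, polyTerm_def, support_neg]
  refine (sumL_neg _).trans ?_
  rw [List.map_map]
  refine scong ?_
  rw [List.forall₂_map_right_iff, List.forall₂_map_left_iff]
  refine List.forall₂_same.mpr fun d _ => ?_
  show (mTerm (α.coeff d) d).neg ~~ mTerm ((-α).coeff d) d
  rw [show (-α).coeff d = -(α.coeff d) from rfl]
  exact mTerm_neg _ _

theorem botFree_zcanP (l : List (Fin n)) : botFree (prodF (l.map var)) := by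
  refine botFree_prodF fun x hx => ?_
  rcases List.mem_map.mp hx with ⟨i, _, rfl⟩
  trivial

theorem mTerm_mul (c c' : ℤ) (d d' : Fin n →₀ ℕ) :
    (mTerm c d).mul (mTerm c' d') ~~ mTerm (c * c') (d + d') :=
  calc (mTerm c d).mul (mTerm c' d')
      ~~ ((intNumeral n c).mul (intNumeral n c')).mul ((monTerm d).mul (monTerm d')) :=
        mul_mul_mul_comm _ _ _ _
    _ ~~ (intNumeral n (c * c')).mul (monTerm (d + d')) :=
        mul_congr (intNumeral_mul c c') (monTerm_mul d d')

theorem scong_bind {A : Type} {l : List A} {f g : A → List (RTerm n)}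
    (h : ∀ a ∈ l, List.Forall₂ DerivWcr (f a) (g a)) :
    sumL (l.flatMap f) ~~ sumL (l.flatMap g) := by
  induction l with
  | nil => exact refl _
  | cons a l ih =>
    rw [List.flatMap_cons, List.flatMap_cons]
    refine (sapp _ _).trans (DerivWcr.trans ?_ (sapp _ _).symm)
    exact add_congr (scong (h a (List.mem_cons_self)))
      (ih fun x hx => h x (List.mem_cons_of_mem a hx))

theorem distr_single {W : Finset (Fin n)} {a : RTerm n} (ha : botFree a)
    (hva : varsf a ⊆ W) :
    ∀ l' : List (RTerm n), (∀ x ∈ l', botFree x ∧ varsf x ⊆ W) →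
      (a.mul (sumL l')).add (zcan W) ~~ (sumL (l'.map fun b => a.mul b)).add (zcan W)
  | [], _ =>
    calc (a.mul zero).add (zcan W)
        ~~ (zero.mul a).add (zcan W) := add_congr (mul_comm _ _) (refl _)
      _ ~~ (zcan (varsf a)).add (zcan W) := add_congr (zq a ha) (refl _)
      _ ~~ zcan (varsf a ∪ W) := jmerge _ _
      _ ~~ zcan W := by rw [Finset.union_eq_right.mpr hva]; exact refl _
      _ ~~ zero.add (zcan W) := (zero_add _).symm
  | b :: l', h =>
    calc (a.mul (b.add (sumL l'))).add (zcan W)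
        ~~ ((a.mul b).add (a.mul (sumL l'))).add (zcan W) := add_congr (mul_add _ _ _) (refl _)
      _ ~~ (a.mul b).add ((a.mul (sumL l')).add (zcan W)) := add_assoc _ _ _
      _ ~~ (a.mul b).add ((sumL (l'.map fun x => a.mul x)).add (zcan W)) :=
          add_congr (refl _) (distr_single ha hva l' fun x hx => h x (List.mem_cons_of_mem b hx))
      _ ~~ ((a.mul b).add (sumL (l'.map fun x => a.mul x))).add (zcan W) := (add_assoc _ _ _).symm

theorem distr2 {W : Finset (Fin n)} :
    ∀ l l' : List (RTerm n), (∀ x ∈ l, botFree x ∧ varsf x ⊆ W) →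
      (∀ x ∈ l', botFree x ∧ varsf x ⊆ W) →
      ((sumL l).mul (sumL l')).add (zcan W) ~~
        (sumL (l.flatMap fun a => l'.map fun b => a.mul b)).add (zcan W)
  | [], l', _, hl' => by
    have hbf : botFree (sumL l') := botFree_sumL fun x hx => (hl' x hx).1
    have hvs : varsf (sumL l') ⊆ W := by
      intro j hj
      rcases mem_varsf_sumL.mp hj with ⟨x, hx, hjx⟩
      exact (hl' x hx).2 hjx
    calc (zero.mul (sumL l')).add (zcan W)
        ~~ (zcan (varsf (sumL l'))).add (zcan W) := add_congr (zq _ hbf) (refl _)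
      _ ~~ zcan (varsf (sumL l') ∪ W) := jmerge _ _
      _ ~~ zcan W := by rw [Finset.union_eq_right.mpr hvs]; exact refl _
      _ ~~ zero.add (zcan W) := (zero_add _).symm
  | a :: l, l', hl, hl' => by
    have ha := hl a (List.mem_cons_self)
    rw [List.flatMap_cons]
    calc ((a.add (sumL l)).mul (sumL l')).add (zcan W)
        ~~ ((a.mul (sumL l')).add ((sumL l).mul (sumL l'))).add (zcan W) :=
          add_congr (add_mul' _ _ _) (refl _)
      _ ~~ (a.mul (sumL l')).add (((sumL l).mul (sumL l')).add (zcan W)) := add_assoc _ _ _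
      _ ~~ (a.mul (sumL l')).add
            ((sumL (l.flatMap fun a => l'.map fun b => a.mul b)).add (zcan W)) :=
          add_congr (refl _) (distr2 l l' (fun x hx => hl x (List.mem_cons_of_mem a hx)) hl')
      _ ~~ (a.mul (sumL l')).add
            ((zcan W).add (sumL (l.flatMap fun a => l'.map fun b => a.mul b))) :=
          add_congr (refl _) (add_comm _ _)
      _ ~~ ((a.mul (sumL l')).add (zcan W)).add
            (sumL (l.flatMap fun a => l'.map fun b => a.mul b)) := (add_assoc _ _ _).symm
      _ ~~ ((sumL (l'.map fun b => a.mul b)).add (zcan W)).add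
            (sumL (l.flatMap fun a => l'.map fun b => a.mul b)) :=
          add_congr (distr_single ha.1 ha.2 l' hl') (refl _)
      _ ~~ (sumL (l'.map fun b => a.mul b)).add
            ((zcan W).add (sumL (l.flatMap fun a => l'.map fun b => a.mul b))) := add_assoc _ _ _
      _ ~~ (sumL (l'.map fun b => a.mul b)).add
            ((sumL (l.flatMap fun a => l'.map fun b => a.mul b)).add (zcan W)) :=
          add_congr (refl _) (add_comm _ _)
      _ ~~ ((sumL (l'.map fun b => a.mul b)).add
            (sumL (l.flatMap fun a => l'.map fun b => a.mul b))).add (zcan W) :=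
          (add_assoc _ _ _).symm
      _ ~~ (sumL ((l'.map fun b => a.mul b) ++
            l.flatMap fun a => l'.map fun b => a.mul b)).add (zcan W) :=
          add_congr (sapp _ _).symm (refl _)

/-- main normalisation lemma -/
theorem main : ∀ t : RTerm n, botFree t →
    ∃ α : MvPolynomial (Fin n) ℤ, α.vars ⊆ varsf t ∧
      t ~~ (polyTerm α).add (zcan (varsf t))
  | var i, _ => by
    refine ⟨X i, ?_, ?_⟩
    · rw [vars_X, varsf_var]
    · have h1 : (var i : RTerm n) ~~
          sumL ([((1 : ℤ), Finsupp.single i 1)].map fun p => mTerm p.1 p.2) := by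
        rw [List.map_cons, List.map_nil, sumL_cons, sumL_nil]
        refine DerivWcr.trans ?_ (add_zero _).symm
        show var i ~~ (intNumeral n 1).mul (monTerm (Finsupp.single i 1))
        refine DerivWcr.trans ?_ (one_mul _).symm
        exact (monTerm_single i).symm
      refine h1.trans ((gen _).trans ?_)
      have hp : polyOf [((1 : ℤ), Finsupp.single i 1)] = X i := by
        rw [polyOf_cons, polyOf_nil, _root_.add_zero]
        rfl
      have hv : varsOf [((1 : ℤ), Finsupp.single i 1)] = varsf (var i) := by
        rw [varsOf_cons, varsOf_nil, Finset.union_empty, varsf_var,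
          Finsupp.support_single_ne_zero _ (one_ne_zero)]
      rw [hp, hv]
      exact refl _
  | zero, _ =>
    ⟨0, by simp [vars_0], by
      rw [polyTerm_zero]
      exact ((add_zero zero).symm).trans (add_congr (refl _) zcan_empty.symm)⟩
  | one, _ => by
    refine ⟨1, by simp [vars_one], ?_⟩
    have h1 : (one : RTerm n) ~~
        sumL ([((1 : ℤ), (0 : Fin n →₀ ℕ))].map fun p => mTerm p.1 p.2) := by
      rw [List.map_cons, List.map_nil, sumL_cons, sumL_nil]
      refine DerivWcr.trans ?_ (add_zero _).symm
      show one ~~ (intNumeral n 1).mul (monTerm 0)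
      refine DerivWcr.trans ?_ (one_mul _).symm
      exact (monTerm_zero).symm
    refine h1.trans ((gen _).trans ?_)
    have hp : polyOf [((1 : ℤ), (0 : Fin n →₀ ℕ))] = 1 := by
      rw [polyOf_cons, polyOf_nil, _root_.add_zero]
      rw [monomial_zero', C_1]
    have hv : varsOf [((1 : ℤ), (0 : Fin n →₀ ℕ))] = varsf (one : RTerm n) := by
      rw [varsOf_cons, varsOf_nil, Finset.union_empty, Finsupp.support_zero, varsf_one]
    rw [hp, hv]
    exact refl _
  | neg t, hb => by
    obtain ⟨α, hαv, hα⟩ := main t hb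
    refine ⟨-α, ?_, ?_⟩
    · intro j hj
      rw [varsf_neg]
      refine hαv ?_
      rw [mem_vars] at hj ⊢
      rcases hj with ⟨d, hd, hjd⟩
      rw [support_neg] at hd
      exact ⟨d, hd, hjd⟩
    · rw [varsf_neg]
      calc t.neg ~~ ((polyTerm α).add (zcan (varsf t))).neg := neg_congr hα
        _ ~~ (polyTerm α).neg.add (zcan (varsf t)).neg := neg_add _ _
        _ ~~ (polyTerm (-α)).add (zcan (varsf t)) :=
            add_congr (polyTerm_neg α) (neg_zcan _)
  | add t s, hb => by
    obtain ⟨α, hαv, hα⟩ := main t hb.1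
    obtain ⟨β, hβv, hβ⟩ := main s hb.2
    have hsub : (α + β).vars ⊆ varsf (t.add s) := by
      intro j hj
      rw [varsf_add]
      rcases Finset.mem_union.mp (vars_add_subset α β hj) with h | h
      · exact Finset.mem_union_left _ (hαv h)
      · exact Finset.mem_union_right _ (hβv h)
    refine ⟨α + β, hsub, ?_⟩
    have hLv : varsOf (suppList α ++ suppList β) ⊆ varsf (t.add s) := by
      rw [varsOf_append, varsOf_suppList, varsOf_suppList, varsf_add]
      exact Finset.union_subset_union hαv hβv
    calc t.add s ~~ ((polyTerm α).add (zcan (varsf t))).add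
          ((polyTerm β).add (zcan (varsf s))) := add_congr hα hβ
      _ ~~ ((polyTerm α).add (polyTerm β)).add ((zcan (varsf t)).add (zcan (varsf s))) :=
          add_add_add_comm _ _ _ _
      _ ~~ ((polyTerm α).add (polyTerm β)).add (zcan (varsf t ∪ varsf s)) :=
          add_congr (refl _) (jmerge _ _)
      _ ~~ (sumL (((suppList α) ++ (suppList β)).map fun p => mTerm p.1 p.2)).add
            (zcan (varsf (t.add s))) := by
          rw [List.map_append, varsf_add]
          exact add_congr ((add_congr
            (by rw [polyTerm_eq_sumL]; exact refl _)
            (by rw [polyTerm_eq_sumL]; exact refl _)).trans (sapp _ _).symm) (refl _)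
      _ ~~ ((polyTerm (polyOf (suppList α ++ suppList β))).add
            (zcan (varsOf (suppList α ++ suppList β)))).add (zcan (varsf (t.add s))) :=
          add_congr (gen _) (refl _)
      _ ~~ (polyTerm (α + β)).add ((zcan (varsOf (suppList α ++ suppList β))).add
            (zcan (varsf (t.add s)))) := by
          rw [polyOf_append, polyOf_suppList, polyOf_suppList]
          exact add_assoc _ _ _
      _ ~~ (polyTerm (α + β)).add (zcan (varsOf (suppList α ++ suppList β) ∪
            varsf (t.add s))) := add_congr (refl _) (jmerge _ _)
      _ ~~ (polyTerm (α + β)).add (zcan (varsf (t.add s))) := by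
          rw [Finset.union_eq_right.mpr hLv]
          exact refl _
  | mul t s, hb => by
    obtain ⟨α, hαv, hα⟩ := main t hb.1
    obtain ⟨β, hβv, hβ⟩ := main s hb.2
    set W1 := varsf t
    set W2 := varsf s
    set W : Finset (Fin n) := W1 ∪ W2 with hW
    have hW1 : W1 ⊆ W := Finset.subset_union_left
    have hW2 : W2 ⊆ W := Finset.subset_union_right
    set A := polyTerm α
    set B := polyTerm β
    set P1 := prodF (((W1.sort (· ≤ ·))).map var) with hP1
    set P2 := prodF (((W2.sort (· ≤ ·))).map var) with hP2
    have hz1 : zcan W1 = zero.mul P1 := rfl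
    have hz2 : zcan W2 = zero.mul P2 := rfl
    have hbP1 : botFree P1 := botFree_zcanP _
    have hbP2 : botFree P2 := botFree_zcanP _
    have hvP1 : varsf P1 = W1 := by rw [hP1, varsf_prodF_map_var, Finset.sort_toFinset]
    have hvP2 : varsf P2 = W2 := by rw [hP2, varsf_prodF_map_var, Finset.sort_toFinset]
    have hvA : varsf A = α.vars := varsf_polyTerm α
    have hvB : varsf B = β.vars := varsf_polyTerm β
    -- the three junk products
    have hj1 : (zcan W1).mul B ~~ zcan (W1 ∪ β.vars) := by
      rw [hz1]
      refine ((mul_assoc zero P1 B).symm).trans ?_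
      refine (zq (P1.mul B) ((And.intro hbP1 (botFree_polyTerm β)) : botFree (P1.mul B))).trans ?_
      rw [varsf_mul, hvP1, hvB]
      exact refl _
    have hj2 : A.mul (zcan W2) ~~ zcan (α.vars ∪ W2) := by
      rw [hz2]
      refine (mul_left_comm A zero P2).trans ?_
      refine (zq (A.mul P2) ((And.intro (botFree_polyTerm α) hbP2) : botFree (A.mul P2))).trans ?_
      rw [varsf_mul, hvP2, hvA]
      exact refl _
    have hj3 : (zcan W1).mul (zcan W2) ~~ zcan (W1 ∪ W2) := by
      rw [hz1, hz2]
      refine ((mul_assoc zero P1 (zero.mul P2)).symm).trans ?_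
      refine (zq (P1.mul (zero.mul P2)) ((And.intro hbP1 (And.intro trivial hbP2)) :
        botFree (P1.mul (zero.mul P2)))).trans ?_
      rw [varsf_mul, varsf_mul, hvP1, hvP2, varsf_zero, Finset.empty_union]
      exact refl _
    have hunion : (W1 ∪ β.vars) ∪ ((α.vars ∪ W2) ∪ (W1 ∪ W2)) = W := by
      refine Finset.Subset.antisymm ?_ ?_
      · refine Finset.union_subset (Finset.union_subset hW1 (hβv.trans hW2)) ?_
        refine Finset.union_subset (Finset.union_subset (hαv.trans hW1) hW2) ?_
        exact Finset.union_subset hW1 hW2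
      · intro j hj
        exact Finset.mem_union_right _ (Finset.mem_union_right _ hj)
    have hjunk : ((zcan W1).mul B).add ((A.mul (zcan W2)).add ((zcan W1).mul (zcan W2)))
        ~~ zcan W :=
      calc ((zcan W1).mul B).add ((A.mul (zcan W2)).add ((zcan W1).mul (zcan W2)))
          ~~ (zcan (W1 ∪ β.vars)).add ((zcan (α.vars ∪ W2)).add (zcan (W1 ∪ W2))) :=
            add_congr hj1 (add_congr hj2 hj3)
        _ ~~ (zcan (W1 ∪ β.vars)).add (zcan ((α.vars ∪ W2) ∪ (W1 ∪ W2))) :=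
            add_congr (refl _) (jmerge _ _)
        _ ~~ zcan ((W1 ∪ β.vars) ∪ ((α.vars ∪ W2) ∪ (W1 ∪ W2))) := jmerge _ _
        _ ~~ zcan W := by rw [hunion]; exact refl _
    -- hypotheses for distributing
    have hel : ∀ γ : MvPolynomial (Fin n) ℤ, γ.vars ⊆ W →
        ∀ x ∈ (suppList γ).map fun p => mTerm p.1 p.2, botFree x ∧ varsf x ⊆ W := by
      intro γ hγ x hx
      rcases List.mem_map.mp hx with ⟨p, hp, rfl⟩
      refine ⟨botFree_mTerm _ _, ?_⟩
      rw [varsf_mTerm]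
      intro j hj
      refine hγ ?_
      rcases List.mem_map.mp hp with ⟨d, hd, rfl⟩
      exact mem_vars j |>.mpr ⟨d, Finset.mem_toList.mp hd, hj⟩
    -- the pair list
    set LL := (suppList α).flatMap
      (fun p : ℤ × (Fin n →₀ ℕ) => (suppList β).map
        fun q : ℤ × (Fin n →₀ ℕ) => (p.1 * q.1, p.2 + q.2)) with hLL
    have hgenlist : sumL (((suppList α).map fun p => mTerm p.1 p.2).flatMap
        fun a => (((suppList β).map fun p => mTerm p.1 p.2).map fun b => a.mul b)) ~~
        sumL (LL.map fun p => mTerm p.1 p.2) := by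
      rw [hLL, List.flatMap_map, List.map_flatMap]
      refine scong_bind fun p _ => ?_
      rw [List.map_map, List.forall₂_map_right_iff, List.forall₂_map_left_iff,
        List.forall₂_map_right_iff]
      refine List.forall₂_same.mpr fun (q : ℤ × (Fin n →₀ ℕ)) _ => ?_
      show ((mTerm p.1 p.2).mul (mTerm q.1 q.2)) ~~ mTerm (p.1 * q.1) (p.2 + q.2)
      exact mTerm_mul p.1 q.1 p.2 q.2
    have hpolyLL : polyOf LL = α * β := by
      rw [hLL]
      have hb1 : polyOf ((suppList α).flatMap
          (fun p : ℤ × (Fin n →₀ ℕ) => (suppList β).map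
            fun q : ℤ × (Fin n →₀ ℕ) => (p.1 * q.1, p.2 + q.2))) =
          ((suppList α).map fun p : ℤ × (Fin n →₀ ℕ) => polyOf ((suppList β).map
            fun q : ℤ × (Fin n →₀ ℕ) => (p.1 * q.1, p.2 + q.2))).sum := by
        induction suppList α with
        | nil => rfl
        | cons p L ih =>
          rw [List.flatMap_cons, polyOf_append, ih, List.map_cons, List.sum_cons]
      rw [hb1]
      have hinner : ∀ p : ℤ × (Fin n →₀ ℕ), polyOf ((suppList β).map
          fun q : ℤ × (Fin n →₀ ℕ) => (p.1 * q.1, p.2 + q.2)) = monomial p.2 p.1 * β := by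
        intro p
        have stepA : polyOf ((suppList β).map fun q : ℤ × (Fin n →₀ ℕ) => (p.1 * q.1, p.2 + q.2)) =
            (β.support.toList.map fun d =>
              (monomial (p.2 + d) (p.1 * β.coeff d) : MvPolynomial (Fin n) ℤ)).sum := by
          rw [polyOf, suppList, List.map_map, List.map_map]
          rfl
        rw [stepA]
        have stepB : (β.support.toList.map fun d =>
            (monomial (p.2 + d) (p.1 * β.coeff d) : MvPolynomial (Fin n) ℤ)) =
            β.support.toList.map fun d =>
              (monomial p.2 p.1 : MvPolynomial (Fin n) ℤ) * monomial d (β.coeff d) := by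
          refine List.map_congr_left fun d _ => ?_
          rw [monomial_mul]
        rw [stepB]
        have stepC : (β.support.toList.map fun d =>
            (monomial p.2 p.1 : MvPolynomial (Fin n) ℤ) * monomial d (β.coeff d)) =
            (β.support.toList.map fun d =>
              (monomial d (β.coeff d) : MvPolynomial (Fin n) ℤ)).map
                (fun x => monomial p.2 p.1 * x) := by
          rw [List.map_map]
          rfl
        rw [stepC, List.sum_map_mul_left, List.map_id', Finset.sum_map_toList,
          support_sum_monomial_coeff β]
      have hmap : ((suppList α).map fun p : ℤ × (Fin n →₀ ℕ) => polyOf ((suppList β).map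
          fun q : ℤ × (Fin n →₀ ℕ) => (p.1 * q.1, p.2 + q.2))) =
          (suppList α).map fun p => monomial p.2 p.1 * β :=
        List.map_congr_left fun p _ => hinner p
      rw [hmap]
      have stepD : ((suppList α).map fun p => (monomial p.2 p.1 : MvPolynomial (Fin n) ℤ) * β)
          = (α.support.toList.map fun d =>
              (monomial d (α.coeff d) : MvPolynomial (Fin n) ℤ)).map (fun x => x * β) := by
        rw [suppList, List.map_map, List.map_map]
        rfl
      rw [stepD, List.sum_map_mul_right, List.map_id', Finset.sum_map_toList,
        support_sum_monomial_coeff α]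
    have hvarsLL : varsOf LL ⊆ W := by
      intro j hj
      rcases mem_varsOf.mp hj with ⟨p, hp, hjp⟩
      rw [hLL] at hp
      rcases List.mem_flatMap.mp hp with ⟨q, hq, hpq⟩
      rcases List.mem_map.mp hpq with ⟨r, hr, rfl⟩
      rcases Finset.mem_union.mp (Finsupp.support_add hjp) with h | h
      · rcases List.mem_map.mp hq with ⟨d, hd, rfl⟩
        exact hW1 (hαv (mem_vars j |>.mpr ⟨d, Finset.mem_toList.mp hd, h⟩))
      · rcases List.mem_map.mp hr with ⟨d, hd, rfl⟩
        exact hW2 (hβv (mem_vars j |>.mpr ⟨d, Finset.mem_toList.mp hd, h⟩))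
    have hsub : (α * β).vars ⊆ varsf (t.mul s) := by
      rw [← hpolyLL]
      exact (vars_polyOf_subset LL).trans hvarsLL
    refine ⟨α * β, hsub, ?_⟩
    calc t.mul s ~~ ((A).add (zcan W1)).mul ((B).add (zcan W2)) := mul_congr hα hβ
      _ ~~ ((A.add (zcan W1)).mul B).add ((A.add (zcan W1)).mul (zcan W2)) := mul_add _ _ _
      _ ~~ ((A.mul B).add ((zcan W1).mul B)).add
            ((A.mul (zcan W2)).add ((zcan W1).mul (zcan W2))) :=
          add_congr (add_mul' _ _ _) (add_mul' _ _ _)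
      _ ~~ (A.mul B).add (((zcan W1).mul B).add
            ((A.mul (zcan W2)).add ((zcan W1).mul (zcan W2)))) := add_assoc _ _ _
      _ ~~ (A.mul B).add (zcan W) := add_congr (refl _) hjunk
      _ ~~ ((sumL ((suppList α).map fun p => mTerm p.1 p.2)).mul
            (sumL ((suppList β).map fun p => mTerm p.1 p.2))).add (zcan W) := by
          rw [show A = sumL ((suppList α).map fun p => mTerm p.1 p.2) from polyTerm_eq_sumL α,
            show B = sumL ((suppList β).map fun p => mTerm p.1 p.2) from polyTerm_eq_sumL β]
          exact refl _
      _ ~~ (sumL (((suppList α).map fun p => mTerm p.1 p.2).flatMap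
            fun a => (((suppList β).map fun p => mTerm p.1 p.2).map
              fun b => a.mul b))).add (zcan W) :=
          distr2 _ _ (hel α (hαv.trans hW1)) (hel β (hβv.trans hW2))
      _ ~~ (sumL (LL.map fun p => mTerm p.1 p.2)).add (zcan W) :=
          add_congr hgenlist (refl _)
      _ ~~ ((polyTerm (polyOf LL)).add (zcan (varsOf LL))).add (zcan W) :=
          add_congr (gen LL) (refl _)
      _ ~~ (polyTerm (α * β)).add ((zcan (varsOf LL)).add (zcan W)) := by
          rw [hpolyLL]
          exact add_assoc _ _ _
      _ ~~ (polyTerm (α * β)).add (zcan (varsOf LL ∪ W)) := add_congr (refl _) (jmerge _ _)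
      _ ~~ (polyTerm (α * β)).add (zcan (varsf (t.mul s))) := by
          rw [Finset.union_eq_right.mpr hvarsLL]
          exact refl _
  | bot, hb => absurd hb (by simp [botFree])

/-- every term is `⊥` or `⊥`-free -/
theorem bot_or_free : ∀ t : RTerm n, t ~~ bot ∨ botFree t
  | var _ => Or.inr trivial
  | zero => Or.inr trivial
  | one => Or.inr trivial
  | bot => Or.inl (refl _)
  | neg t => by
    rcases bot_or_free t with h | h
    · exact Or.inl ((neg_congr h).trans neg_bot)
    · exact Or.inr h
  | add t s => by
    rcases bot_or_free t with h | h
    · exact Or.inl ((add_congr h (refl s)).trans (bot_add s))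
    rcases bot_or_free s with h' | h'
    · exact Or.inl ((add_congr (refl t) h').trans (add_bot t))
    · exact Or.inr ⟨h, h'⟩
  | mul t s => by
    rcases bot_or_free t with h | h
    · exact Or.inl ((mul_congr h (refl s)).trans (bot_mul s))
    rcases bot_or_free s with h' | h'
    · exact Or.inl ((mul_congr (refl t) h').trans (mul_bot t))
    · exact Or.inr ⟨h, h'⟩

end DerivWcr
end RTerm

open RTerm in
/-- Quasi-polynomial reduction: every ring-with-`⊥` term is provably equal, from
`E_wcr,⊥`, either to `⊥` or to a quasi-polynomial sumterm `α* + 0·∏_{i∈S} xᵢ`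
with `S` a finite set of variables disjoint from the variables of `α` (the
summand `0·∏_{i∈S} xᵢ` being omitted when `S = ∅`). -/
theorem quasi_polynomial_reduction (n : ℕ) (t : RTerm n) :
    DerivWcr t RTerm.bot ∨
      ∃ (α : MvPolynomial (Fin n) ℤ) (S : Finset (Fin n)),
        (∀ i ∈ S, i ∉ α.vars) ∧
        DerivWcr t
          (if S = ∅ then polyTerm α
           else (polyTerm α).add
             (RTerm.zero.mul (prodList ((S.sort (· ≤ ·)).map RTerm.var)))) := by
  rcases DerivWcr.bot_or_free t with h | h
  · exact Or.inl h
  · right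
    obtain ⟨α, hαv, hα⟩ := DerivWcr.main t h
    refine ⟨α, varsf t \ α.vars, fun i hi => (Finset.mem_sdiff.mp hi).2, ?_⟩
    by_cases hS : varsf t \ α.vars = ∅
    · rw [if_pos hS]
      have hsub : varsf t ⊆ α.vars := by
        intro j hj
        by_contra hc
        exact (Finset.eq_empty_iff_forall_notMem.mp hS j) (Finset.mem_sdiff.mpr ⟨hj, hc⟩)
      refine hα.trans ?_
      refine DerivWcr.absorb_all (DerivWcr.botFree_polyTerm α) ?_
      rw [DerivWcr.varsf_polyTerm]
      exact hsub
    · rw [if_neg hS]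
      have hgrow : DerivWcr ((polyTerm α).add (zcan (varsf t)))
          ((polyTerm α).add (zcan (varsf t \ α.vars))) := by
        refine DerivWcr.grow (DerivWcr.botFree_polyTerm α) ?_
        rw [DerivWcr.varsf_polyTerm, Finset.union_sdiff_self_eq_union]
      refine hα.trans (hgrow.trans ?_)
      exact DerivWcr.add_congr (DerivWcr.refl _)
        (DerivWcr.mul_congr (DerivWcr.refl _) (DerivWcr.prodList_eq _)).symm
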